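/- Let D be a nonzero EDM with Dw = e. Then D is nonspherical (its generating points do not lie on a common sphere) if and only if eᵀw = 0. -/
import Mathlib

local notation "⟪" x ", " y "⟫" => @inner ℝ _ _ x y

theorem nonspherical_EDM_iff
    (n k : ℕ) (p : Fin n → EuclideanSpace ℝ (Fin k))
    (D : Matrix (Fin n) (Fin n) ℝ)
    (hD : ∀ i j, D i j = dist (p i) (p j) ^ 2)
    (hD0 : D ≠ 0)
    (w : Fin n → ℝ)
    (hw : D.mulVec w = fun _ => (1 : ℝ)) :
    (¬ ∃ (c : EuclideanSpace ℝ (Fin k)) (ρ : ℝ), ∀ i, dist (p i) c = ρ) ↔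
      (∑ i, w i) = 0 := by
  have hne : Nonempty (Fin n) := by
    rcases Nat.eq_zero_or_pos n with h | h
    · subst h
      exact absurd (by ext i j; exact i.elim0) hD0
    · exact ⟨⟨0, h⟩⟩
  obtain ⟨i0⟩ := hne
  set s := ∑ i, w i with hs
  set u : EuclideanSpace ℝ (Fin k) := ∑ j, w j • p j with hu
  set T := ∑ j, w j * ‖p j‖ ^ 2 with hT
  have hrow : ∀ i, ∑ j, D i j * w j = 1 := by
    intro i
    have := congrFun hw i
    simpa [Matrix.mulVec, dotProduct] using this
  have hinner : ∀ x : EuclideanSpace ℝ (Fin k), ⟪x, u⟫ = ∑ j, w j * ⟪x, p j⟫ := by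
    intro x
    rw [hu, inner_sum]
    exact Finset.sum_congr rfl fun j _ => real_inner_smul_right _ _ _
  have key : ∀ i, s * ‖p i‖ ^ 2 - 2 * ⟪p i, u⟫ + T = 1 := by
    intro i
    have h1 := hrow i
    have h2 : ∀ j, D i j = ‖p i‖ ^ 2 - 2 * ⟪p i, p j⟫ + ‖p j‖ ^ 2 := by
      intro j
      rw [hD i j, dist_eq_norm, norm_sub_sq_real]
    calc s * ‖p i‖ ^ 2 - 2 * ⟪p i, u⟫ + T
        = ∑ j, (‖p i‖ ^ 2 - 2 * ⟪p i, p j⟫ + ‖p j‖ ^ 2) * w j := by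
          rw [hinner, hs, hT]
          rw [Finset.sum_mul, Finset.mul_sum]
          rw [← Finset.sum_sub_distrib, ← Finset.sum_add_distrib]
          congr 1; ext j; ring
      _ = ∑ j, D i j * w j := by
          congr 1; ext j; rw [h2]
      _ = 1 := h1
  have hsphere : (∃ (c : EuclideanSpace ℝ (Fin k)) (ρ : ℝ), ∀ i, dist (p i) c = ρ) ↔ s ≠ 0 := by
    constructor
    · rintro ⟨c, ρ, hc⟩ hs0
      -- shifted key
      have key2 : ∀ i, 2 * ρ ^ 2 * s - 2 * ⟪p i - c, u - s • c⟫ = 1 := by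
        intro i
        have h1 := hrow i
        have h2 : ∀ j, D i j = 2 * ρ ^ 2 - 2 * ⟪p i - c, p j - c⟫ := by
          intro j
          have e1 : ‖p i - c‖ = ρ := by rw [← dist_eq_norm]; exact hc i
          have e2 : ‖p j - c‖ = ρ := by rw [← dist_eq_norm]; exact hc j
          have : dist (p i) (p j) = ‖(p i - c) - (p j - c)‖ := by
            rw [dist_eq_norm]; congr 1; abel
          rw [hD i j, this, norm_sub_sq_real, e1, e2]; ring
        have husc : (∑ j, w j • (p j - c)) = u - s • c := by
          rw [hu, hs]
          simp [smul_sub, Finset.sum_sub_distrib, Finset.sum_smul]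
        calc 2 * ρ ^ 2 * s - 2 * ⟪p i - c, u - s • c⟫
            = ∑ j, (2 * ρ ^ 2 - 2 * ⟪p i - c, p j - c⟫) * w j := by
              rw [← husc, inner_sum]
              simp only [real_inner_smul_right]
              rw [hs, Finset.mul_sum, Finset.mul_sum, ← Finset.sum_sub_distrib]
              congr 1; ext j; ring
          _ = ∑ j, D i j * w j := by congr 1; ext j; rw [h2]
          _ = 1 := h1
      have key3 : ∀ i, ⟪p i - c, u⟫ = -(1/2) := by
        intro i
        have h := key2 i
        rw [hs0] at h
        simp only [mul_zero, zero_smul, sub_zero, zero_sub] at h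
        linarith
      have huu : ⟪u, u⟫ = 0 := by
        have hc0 : (∑ j, w j • c) = (0 : EuclideanSpace ℝ (Fin k)) := by
          rw [← Finset.sum_smul, ← hs, hs0, zero_smul]
        have husc : u = ∑ j, w j • (p j - c) := by
          rw [hu]
          simp only [smul_sub, Finset.sum_sub_distrib, hc0, sub_zero]
        calc ⟪u, u⟫ = ⟪∑ j, w j • (p j - c), u⟫ := by rw [← husc]
          _ = ∑ j, w j * ⟪p j - c, u⟫ := by
                rw [sum_inner]
                exact Finset.sum_congr rfl fun j _ => real_inner_smul_left _ _ _
          _ = ∑ j, w j * (-(1/2)) := by congr 1; ext j; rw [key3 j]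
          _ = -(1/2) * s := by rw [hs, ← Finset.sum_mul]; ring
          _ = 0 := by rw [hs0]; ring
      have hu0 : u = 0 := by
        have := inner_self_eq_zero (𝕜 := ℝ) (x := u)
        exact this.mp huu
      have := key3 i0
      rw [hu0] at this
      simp at this
    · intro hs0
      refine ⟨(s⁻¹) • u, dist (p i0) ((s⁻¹) • u), fun i => ?_⟩
      have hconst : ∀ i, dist (p i) ((s⁻¹) • u) ^ 2 = ‖(s⁻¹) • u‖ ^ 2 - s⁻¹ * (T - 1) := by
        intro i
        have hk := key i
        have : ⟪p i, (s⁻¹) • u⟫ = s⁻¹ * ⟪p i, u⟫ := real_inner_smul_right _ _ _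
        rw [dist_eq_norm, norm_sub_sq_real, this]
        have hss : s⁻¹ * s = 1 := inv_mul_cancel₀ hs0
        linear_combination s⁻¹ * hk - ‖p i‖ ^ 2 * hss
      have h1 := hconst i
      have h2 := hconst i0
      have heq : dist (p i) ((s⁻¹) • u) ^ 2 = dist (p i0) ((s⁻¹) • u) ^ 2 := by
        rw [h1, h2]
      have := Real.sqrt_sq (dist_nonneg (x := p i) (y := (s⁻¹) • u))
      rw [← this, heq, Real.sqrt_sq (dist_nonneg)]
  rw [hsphere.not_left]
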